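/- arXiv:2408.08392 — 7 statements merged into one kernel-verified Lean document; each statement's English description precedes it below -/
import Mathlib

section
/- Let r_max ≥ 1 and ρ = lcm{1,...,r_max}. Let F' be a finite multiset of positive integers each at most r_max, whose total sum exceeds r_max·(ρ−1). Then there exists a value r ∈ {1,...,r_max} and a sub-multiset of F' consisting entirely of copies of r whose sum is exactly ρ. -/
/-- If a finite multiset of positive integers, each at most `r_max`, has total sum
exceeding `r_max * (ρ - 1)` where `ρ = lcm{1,...,r_max}`, then it contains a
homogeneous `ρ`-block: a sub-multiset all of whose elements equal some common
value `r ∈ {1,...,r_max}` and whose sum is exactly `ρ`. -/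
theorem stmt_1 (r_max : ℕ) (hr : 1 ≤ r_max) (F' : Multiset ℕ)
    (hmem : ∀ x ∈ F', 1 ≤ x ∧ x ≤ r_max)
    (hsum : r_max * ((Finset.Icc 1 r_max).lcm id - 1) < F'.sum) :
    ∃ r ∈ Finset.Icc 1 r_max, ∃ B : Multiset ℕ,
      B ≤ F' ∧ (∀ x ∈ B, x = r) ∧ B.sum = (Finset.Icc 1 r_max).lcm id := by
  set ρ := (Finset.Icc 1 r_max).lcm id with hρ
  have hdvd : ∀ r ∈ Finset.Icc 1 r_max, r ∣ ρ := fun r h => Finset.dvd_lcm h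
  -- key claim: some r has enough copies
  have key : ∃ r ∈ Finset.Icc 1 r_max, ρ / r ≤ F'.count r := by
    by_contra h
    push_neg at h
    have hsub : F'.toFinset ⊆ Finset.Icc 1 r_max := by
      intro a ha
      rw [Multiset.mem_toFinset] at ha
      exact Finset.mem_Icc.mpr (hmem a ha)
    have hsum' : F'.sum = ∑ a ∈ F'.toFinset, F'.count a * a := by
      conv_lhs => rw [← Multiset.toFinset_sum_count_nsmul_eq F']
      rw [← Multiset.coe_sumAddMonoidHom, map_sum]
      simp [Multiset.sum_nsmul]
    have hbound : ∀ a ∈ Finset.Icc 1 r_max, F'.count a * a ≤ ρ - 1 := by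
      intro a ha
      have ha1 : 1 ≤ a := (Finset.mem_Icc.mp ha).1
      have hc : F'.count a < ρ / a := h a ha
      have hda : a ∣ ρ := hdvd a ha
      have : F'.count a * a ≤ (ρ / a - 1) * a :=
        Nat.mul_le_mul_right a (Nat.le_sub_one_of_lt hc)
      calc F'.count a * a ≤ (ρ / a - 1) * a := this
        _ = ρ / a * a - a := by rw [Nat.sub_mul, one_mul]
        _ = ρ - a := by rw [Nat.div_mul_cancel hda]
        _ ≤ ρ - 1 := Nat.sub_le_sub_left ha1 ρ
    have : F'.sum ≤ r_max * (ρ - 1) := by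
      rw [hsum']
      calc ∑ a ∈ F'.toFinset, F'.count a * a
          ≤ ∑ a ∈ Finset.Icc 1 r_max, F'.count a * a :=
            Finset.sum_le_sum_of_subset hsub
        _ ≤ ∑ a ∈ Finset.Icc 1 r_max, (ρ - 1) := Finset.sum_le_sum hbound
        _ = r_max * (ρ - 1) := by simp [Nat.card_Icc]
    omega
  obtain ⟨r, hrmem, hcount⟩ := key
  have hr1 : 1 ≤ r := (Finset.mem_Icc.mp hrmem).1
  refine ⟨r, hrmem, Multiset.replicate (ρ / r) r, ?_, ?_, ?_⟩
  · exact (Multiset.le_count_iff_replicate_le).mp hcount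
  · intro x hx; exact Multiset.eq_of_mem_replicate hx
  · rw [Multiset.sum_replicate, smul_eq_mul, Nat.div_mul_cancel (hdvd r hrmem)]
end

section
/- With utilities defined as in the standard Pareto-to-MaxUtil reduction (u_i[j] = |{p_{j'} : p_j ⪰_i p_{j'}}| for acceptable places, −m·n for unacceptable places), if σ' is a Pareto-improvement of σ among acceptable assignments, then util(σ') > util(σ). Hence a maximum-utility feasible assignment with positive utility is feasible, acceptable and Pareto-optimal for the original preference instance. -/
open Classical

/-- Utility from the standard Pareto-to-MaxUtil reduction. -/
noncomputable def reducUtil7 {F P : Type*} [Fintype F] [Fintype P]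
    (acc : F → P → Prop) (pref : F → P → P → Prop) (f : F) (p : P) : ℤ :=
  if acc f p then (Nat.card {p' : P // acc f p' ∧ pref f p p'} : ℤ)
  else -(Fintype.card P * Fintype.card F : ℕ)

noncomputable def reducTotal7 {F P : Type*} [Fintype F] [Fintype P]
    (acc : F → P → Prop) (pref : F → P → P → Prop) (σ : F → Option P) : ℤ :=
  ∑ f, (σ f).elim 0 (reducUtil7 acc pref f)

/-- The preference order extended to `Option P`, with `⊥ = none` at the bottom:
`wle f o o'` means `f` weakly prefers outcome `o'` to outcome `o`. -/
def wle7 {F P : Type*} (pref : F → P → P → Prop) (f : F) (o o' : Option P) : Prop :=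
  match o, o' with
  | none, _ => True
  | some _, none => False
  | some p, some q => pref f q p

/-- Acceptable assignment. -/
def Acc7 {F P : Type*} (acc : F → P → Prop) (σ : F → Option P) : Prop :=
  ∀ f p, σ f = some p → acc f p

/-- Pareto-improvement: every family weakly improves, some family strictly. -/
def PImp7 {F P : Type*} (pref : F → P → P → Prop) (σ σ' : F → Option P) : Prop :=
  (∀ f, wle7 pref f (σ f) (σ' f)) ∧
  (∃ f, wle7 pref f (σ f) (σ' f) ∧ ¬ wle7 pref f (σ' f) (σ f))

section Aux
variable {F P : Type*} [Fintype F] [Fintype P]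
    (acc : F → P → Prop) (pref : F → P → P → Prop)

lemma autil_le (f : F) (o : Option P) :
    o.elim 0 (reducUtil7 acc pref f) ≤ (Fintype.card P : ℤ) := by
  match o with
  | none => simp
  | some p =>
    simp only [Option.elim, reducUtil7]
    split
    · have : Nat.card {p' : P // acc f p' ∧ pref f p p'} ≤ Nat.card P :=
        Nat.card_le_card_of_injective Subtype.val Subtype.val_injective
      exact_mod_cast le_of_le_of_eq this Nat.card_eq_fintype_card
    · have : (0:ℤ) ≤ Fintype.card P := by positivity
      have h2 : (0:ℤ) ≤ (Fintype.card P * Fintype.card F : ℕ) := by positivity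
      omega

lemma autil_le' (htrans : ∀ f p q s, pref f p q → pref f q s → pref f p s)
    (f : F) (o o' : Option P)
    (ho : ∀ p, o = some p → acc f p) (ho' : ∀ p, o' = some p → acc f p)
    (h : wle7 pref f o o') :
    o.elim 0 (reducUtil7 acc pref f) ≤ o'.elim 0 (reducUtil7 acc pref f) := by
  match o, o' with
  | none, none => simp
  | none, some q =>
    simp only [Option.elim, reducUtil7, if_pos (ho' q rfl)]
    positivity
  | some p, none => exact absurd h (by simp [wle7])
  | some p, some q =>
    have hpq : pref f q p := h
    simp only [Option.elim, reducUtil7, if_pos (ho p rfl), if_pos (ho' q rfl)]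
    have : Nat.card {p' : P // acc f p' ∧ pref f p p'} ≤
        Nat.card {p' : P // acc f p' ∧ pref f q p'} :=
      Nat.card_le_card_of_injective
        (fun x => ⟨x.1, x.2.1, htrans f q p x.1 hpq x.2.2⟩)
        (fun a b hab => by simpa [Subtype.ext_iff] using hab)
    exact_mod_cast this

lemma autil_lt (hrefl : ∀ f p, acc f p → pref f p p)
    (htrans : ∀ f p q s, pref f p q → pref f q s → pref f p s)
    (f : F) (o o' : Option P)
    (ho : ∀ p, o = some p → acc f p) (ho' : ∀ p, o' = some p → acc f p)
    (h : wle7 pref f o o') (h2 : ¬ wle7 pref f o' o) :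
    o.elim 0 (reducUtil7 acc pref f) < o'.elim 0 (reducUtil7 acc pref f) := by
  match o, o' with
  | none, none => exact absurd trivial h2
  | none, some q =>
    have haq := ho' q rfl
    simp only [Option.elim, reducUtil7, if_pos haq]
    have : 0 < Nat.card {p' : P // acc f q ∧ pref f q p'} := by
      have : Nonempty {p' : P // acc f q ∧ pref f q p'} := ⟨⟨q, haq, hrefl f q haq⟩⟩
      exact Nat.card_pos
    have : 0 < Nat.card {p' : P // acc f p' ∧ pref f q p'} := by
      have : Nonempty {p' : P // acc f p' ∧ pref f q p'} := ⟨⟨q, haq, hrefl f q haq⟩⟩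
      exact Nat.card_pos
    exact_mod_cast this
  | some p, none => exact absurd h (by simp [wle7])
  | some p, some q =>
    have hpq : pref f q p := h
    have hnqp : ¬ pref f p q := h2
    have hap := ho p rfl; have haq := ho' q rfl
    simp only [Option.elim, reducUtil7, if_pos hap, if_pos haq]
    have hss : {p' : P | acc f p' ∧ pref f p p'} ⊂ {p' : P | acc f p' ∧ pref f q p'} := by
      constructor
      · intro x hx
        exact ⟨hx.1, htrans f q p x hpq hx.2⟩
      · intro hsub
        exact hnqp (hsub ⟨haq, hrefl f q haq⟩).2
    have := Set.ncard_lt_ncard hss (Set.toFinite _)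
    rw [← Nat.card_coe_set_eq, ← Nat.card_coe_set_eq] at this
    exact_mod_cast this

end Aux


/-- With the reduction utilities: a Pareto-improvement among acceptable assignments
strictly increases total utility; hence a maximum-utility feasible assignment with
positive utility is feasible, acceptable, and Pareto-optimal. -/
theorem stmt_7 {F P : Type*} [Fintype F] [Fintype P]
    (acc : F → P → Prop) (pref : F → P → P → Prop)
    (hpref_acc : ∀ f p q, pref f p q → acc f p ∧ acc f q)
    (hrefl : ∀ f p, acc f p → pref f p p)
    (htrans : ∀ f p q s, pref f p q → pref f q s → pref f p s)
    (feasible : (F → Option P) → Prop) :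
    (∀ σ σ' : F → Option P, Acc7 acc σ → Acc7 acc σ' → PImp7 pref σ σ' →
      reducTotal7 acc pref σ < reducTotal7 acc pref σ') ∧
    (∀ σ : F → Option P, feasible σ →
      (∀ τ, feasible τ → reducTotal7 acc pref τ ≤ reducTotal7 acc pref σ) →
      0 < reducTotal7 acc pref σ →
      Acc7 acc σ ∧
        ∀ σ', feasible σ' → Acc7 acc σ' → ¬ PImp7 pref σ σ') := by
  have part1 : ∀ σ σ' : F → Option P, Acc7 acc σ → Acc7 acc σ' → PImp7 pref σ σ' →
      reducTotal7 acc pref σ < reducTotal7 acc pref σ' := by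
    rintro σ σ' hσ hσ' ⟨hw, f0, hf0, hns⟩
    apply Finset.sum_lt_sum
    · intro f _
      exact autil_le' acc pref htrans f (σ f) (σ' f)
        (fun p hp => hσ f p hp) (fun p hp => hσ' f p hp) (hw f)
    · exact ⟨f0, Finset.mem_univ _,
        autil_lt acc pref hrefl htrans f0 (σ f0) (σ' f0)
          (fun p hp => hσ f0 p hp) (fun p hp => hσ' f0 p hp) hf0 hns⟩
  refine ⟨part1, ?_⟩
  intro σ hfeas hmax hpos
  have hacc : Acc7 acc σ := by
    intro f p hfp
    by_contra hnacc
    have hone : (σ f).elim 0 (reducUtil7 acc pref f)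
        = -((Fintype.card P * Fintype.card F : ℕ) : ℤ) := by
      rw [hfp]; simp [reducUtil7, hnacc]
    have hsplit : reducTotal7 acc pref σ =
        (∑ g ∈ Finset.univ.erase f, (σ g).elim 0 (reducUtil7 acc pref g))
          + (σ f).elim 0 (reducUtil7 acc pref f) := by
      rw [reducTotal7, Finset.sum_erase_add Finset.univ _ (Finset.mem_univ f)]
    have h1 : (∑ g ∈ Finset.univ.erase f, (σ g).elim 0 (reducUtil7 acc pref g))
        ≤ ((Finset.univ.erase f).card : ℤ) * (Fintype.card P : ℤ) := by
      have := Finset.sum_le_card_nsmul (Finset.univ.erase f)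
        (fun g => (σ g).elim 0 (reducUtil7 acc pref g)) ((Fintype.card P : ℤ))
        (fun g _ => autil_le acc pref g (σ g))
      simpa [nsmul_eq_mul] using this
    have hcard : ((Finset.univ.erase f).card : ℤ) ≤ (Fintype.card F : ℤ) := by
      exact_mod_cast Finset.card_le_card (Finset.erase_subset _ _) |>.trans
        (le_of_eq (Finset.card_univ))
    have h2 : ((Finset.univ.erase f).card : ℤ) * (Fintype.card P : ℤ)
        ≤ (Fintype.card F : ℤ) * (Fintype.card P : ℤ) :=
      mul_le_mul_of_nonneg_right hcard (by positivity)
    have : reducTotal7 acc pref σ ≤ 0 := by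
      rw [hsplit, hone]
      push_cast
      nlinarith
    omega
  refine ⟨hacc, ?_⟩
  intro σ' hfeas' hacc' hpi
  exact absurd (hmax σ' hfeas') (not_le.mpr (part1 σ σ' hacc hacc' hpi))
end

section
/- Let G be a graph with vertex set V and edge set E, and consider the single-place resettlement instance in which families are the vertices, services are E ∪ {s_1,...,s_k} where V is partitioned into V_1,...,V_k; each vertex v ∈ V_i requires one unit of each service corresponding to its incident edges and one unit of s_i; the single place p has upper quota 1 on every service, lower quota 1 on each s_i and 0 on each edge-service. Then a feasible assignment exists if and only if G contains an independent set with exactly one vertex from each V_i. -/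
attribute [local instance] Classical.propDecidable

/-- Multicolored-independent-set instance: families are vertices, the single place
offers one unit of each edge-service (upper quota 1, lower quota 0) and one unit of
each colour-service `s_i` (lower and upper quota 1); vertex `v` in part `i` requires
one unit of each incident-edge service and one unit of `s_i`. A feasible assignment
(set `S` of families sent to the place) exists iff `G` has an independent set with
exactly one vertex from each part. -/
theorem stmt_8 {V : Type*} [Fintype V] [DecidableEq V] (G : SimpleGraph V)
    (k : ℕ) (c : V → Fin k) :
    (∃ S : Finset V,
        (∀ e ∈ G.edgeSet, (S.filter (fun v => v ∈ e)).card ≤ 1) ∧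
        (∀ i : Fin k, (S.filter (fun v => c v = i)).card = 1)) ↔
    (∃ S : Finset V,
        (∀ u ∈ S, ∀ v ∈ S, ¬ G.Adj u v) ∧
        (∀ i : Fin k, ∃! v, v ∈ S ∧ c v = i)) := by
  constructor
  · rintro ⟨S, hE, hC⟩
    refine ⟨S, ?_, ?_⟩
    · intro u hu v hv hadj
      have he : s(u, v) ∈ G.edgeSet := hadj
      have h := hE _ he
      have hne : u ≠ v := G.ne_of_adj hadj
      have hu' : u ∈ S.filter (fun w => w ∈ s(u, v)) := by
        simp [Finset.mem_filter, hu]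
      have hv' : v ∈ S.filter (fun w => w ∈ s(u, v)) := by
        simp [Finset.mem_filter, hv]
      have : ({u, v} : Finset V) ⊆ S.filter (fun w => w ∈ s(u, v)) := by
        intro x hx
        rcases Finset.mem_insert.mp hx with rfl | hx
        · exact hu'
        · rw [Finset.mem_singleton.mp hx]; exact hv'
      have h2 : ({u, v} : Finset V).card = 2 := Finset.card_pair hne
      have := Finset.card_le_card this
      omega
    · intro i
      obtain ⟨v, hv⟩ := Finset.card_eq_one.mp (hC i)
      refine ⟨v, ?_, ?_⟩
      · have : v ∈ S.filter (fun w => c w = i) := hv ▸ Finset.mem_singleton_self v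
        simpa [Finset.mem_filter] using this
      · intro w ⟨hwS, hwc⟩
        have : w ∈ S.filter (fun x => c x = i) := Finset.mem_filter.mpr ⟨hwS, hwc⟩
        rw [hv, Finset.mem_singleton] at this
        exact this
  · rintro ⟨S, hind, hC⟩
    refine ⟨S, ?_, ?_⟩
    · intro e he
      by_contra h
      push_neg at h
      obtain ⟨u, hu, v, hv, huv⟩ := Finset.one_lt_card.mp h
      simp only [Finset.mem_filter] at hu hv
      induction e using Sym2.ind with
      | _ a b =>
        rw [Sym2.mem_iff] at hu hv
        have hadj : G.Adj a b := he
        rcases hu.2 with rfl | rfl <;> rcases hv.2 with rfl | rfl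
        · exact huv rfl
        · exact hind _ hu.1 _ hv.1 hadj
        · exact hind _ hv.1 _ hu.1 hadj
        · exact huv rfl
    · intro i
      obtain ⟨v, ⟨hvS, hvc⟩, huniq⟩ := hC i
      rw [Finset.card_eq_one]
      refine ⟨v, Finset.eq_singleton_iff_unique_mem.mpr ⟨Finset.mem_filter.mpr ⟨hvS, hvc⟩, ?_⟩⟩
      intro w hw
      simp only [Finset.mem_filter] at hw
      exact huniq w hw
end

section
/- Let G = (V, E) be a graph. Consider the resettlement instance with families V, services E, three places p_1, p_2, p_3 each offering exactly one unit of each service in E with zero lower quotas, where each vertex-family v requires one unit of each service corresponding to an edge incident to v. Then a feasible and complete assignment (every family assigned to some place) exists if and only if G is properly 3-colorable. -/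
attribute [local instance] Classical.propDecidable

/-- Three places, each offering one unit of each edge-service, no lower quotas;
each vertex-family requires one unit of each incident-edge service. There is a
feasible and complete assignment iff the graph is properly 3-colorable. -/
theorem stmt_9 {V : Type*} [Fintype V] [DecidableEq V] (G : SimpleGraph V) :
    (∃ σ : V → Option (Fin 3),
        (∀ v, σ v ≠ none) ∧
        (∀ j : Fin 3, ∀ e ∈ G.edgeSet,
          (Finset.univ.filter (fun v => σ v = some j ∧ v ∈ e)).card ≤ 1)) ↔
    (∃ c : V → Fin 3, ∀ u v, G.Adj u v → c u ≠ c v) := by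
  constructor
  · rintro ⟨σ, hcomp, hfeas⟩
    refine ⟨fun v => (σ v).get (Option.ne_none_iff_isSome.mp (hcomp v)), ?_⟩
    intro u v huv hc
    simp only at hc
    have hu : σ u = some ((σ u).get (Option.ne_none_iff_isSome.mp (hcomp u))) :=
      (Option.some_get _).symm
    have hv : σ v = some ((σ v).get (Option.ne_none_iff_isSome.mp (hcomp v))) :=
      (Option.some_get _).symm
    set j := (σ u).get (Option.ne_none_iff_isSome.mp (hcomp u)) with hj
    have hvj : σ v = some j := by rw [hv, hc]
    have he : s(u, v) ∈ G.edgeSet := huv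
    have hcard := hfeas j s(u, v) he
    have hsub : ({u, v} : Finset V) ⊆
        Finset.univ.filter (fun w => σ w = some j ∧ w ∈ s(u, v)) := by
      intro w hw
      simp only [Finset.mem_insert, Finset.mem_singleton] at hw
      rcases hw with rfl | rfl <;>
        simp [Finset.mem_filter, hu, hvj, Sym2.mem_iff]
    have h2 : ({u, v} : Finset V).card = 2 :=
      Finset.card_pair (G.ne_of_adj huv)
    have := Finset.card_le_card hsub
    omega
  · rintro ⟨c, hc⟩
    refine ⟨fun v => some (c v), fun v => by simp, ?_⟩
    intro j e he
    induction e with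
    | h a b =>
      have hab : G.Adj a b := he
      have hne := hc a b hab
      refine Finset.card_le_one.mpr ?_
      intro x hx y hy
      simp only [Finset.mem_filter, Finset.mem_univ, true_and, Sym2.mem_iff,
        Option.some_inj] at hx hy
      obtain ⟨hxj, hxm⟩ := hx
      obtain ⟨hyj, hym⟩ := hy
      rcases hxm with rfl | rfl <;> rcases hym with rfl | rfl <;>
        first | rfl | (exact absurd (hxj.trans hyj.symm) hne) |
          (exact absurd (hyj.trans hxj.symm) hne)
end

section
/- Let G = (V, E) be a graph and k ≤ |V|. Consider the resettlement instance with families V, services E ∪ {s*}, and two places: p* offering one unit of each edge-service and k units of s*, and p offering |V|−k units of every service; each family v requires one unit of s* and one unit of each service for its incident edges; there are no lower quotas. Then a feasible complete assignment exists if and only if G has an independent set of size k. -/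
attribute [local instance] Classical.propDecidable

/-- Two places: `p*` (encoded `true`) offers one unit of each edge-service and `k`
units of `s*`; `p` (encoded `false`) offers `|V| - k` units of every service. Each
vertex-family requires one unit of `s*` and one unit of each incident-edge service;
no lower quotas. A feasible complete assignment exists iff `G` has an independent
set of size `k`. -/
theorem stmt_10 {V : Type*} [Fintype V] [DecidableEq V] (G : SimpleGraph V)
    (k : ℕ) (hk : k ≤ Fintype.card V) :
    (∃ σ : V → Option Bool,
        (∀ v, σ v ≠ none) ∧
        (Finset.univ.filter (fun v => σ v = some true)).card ≤ k ∧
        (Finset.univ.filter (fun v => σ v = some false)).card ≤ Fintype.card V - k ∧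
        (∀ e ∈ G.edgeSet,
          (Finset.univ.filter (fun v => σ v = some true ∧ v ∈ e)).card ≤ 1) ∧
        (∀ e ∈ G.edgeSet,
          (Finset.univ.filter (fun v => σ v = some false ∧ v ∈ e)).card ≤
            Fintype.card V - k)) ↔
    (∃ S : Finset V, S.card = k ∧ ∀ u ∈ S, ∀ v ∈ S, ¬ G.Adj u v) := by
  constructor
  · rintro ⟨σ, hnone, htrue, hfalse, hedge, -⟩
    refine ⟨Finset.univ.filter (fun v => σ v = some true), ?_, ?_⟩
    · have hunion : (Finset.univ : Finset V) =
          (Finset.univ.filter (fun v => σ v = some true)) ∪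
          (Finset.univ.filter (fun v => σ v = some false)) := by
        ext v
        simp only [Finset.mem_union, Finset.mem_filter, Finset.mem_univ, true_and, true_iff]
        cases h : σ v with
        | none => exact absurd h (hnone v)
        | some b => cases b <;> simp
      have hdisj : Disjoint (Finset.univ.filter (fun v => σ v = some true))
          (Finset.univ.filter (fun v => σ v = some false)) := by
        rw [Finset.disjoint_filter]
        intro v _ h1 h2
        rw [h1] at h2; simp at h2
      have hcard : (Finset.univ.filter (fun v => σ v = some true)).card +
          (Finset.univ.filter (fun v => σ v = some false)).card = Fintype.card V := by
        rw [← Finset.card_union_of_disjoint hdisj, ← hunion, Finset.card_univ]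
      omega
    · intro u hu v hv hadj
      have hne := hadj.ne
      have he : s(u,v) ∈ G.edgeSet := hadj
      have h1 := hedge _ he
      have hsub : ({u, v} : Finset V) ⊆
          Finset.univ.filter (fun w => σ w = some true ∧ w ∈ s(u,v)) := by
        intro w hw
        simp only [Finset.mem_insert, Finset.mem_singleton] at hw
        simp only [Finset.mem_filter, Finset.mem_univ, true_and]
        rcases hw with rfl | rfl
        · exact ⟨(Finset.mem_filter.mp hu).2, Sym2.mem_mk_left _ _⟩
        · exact ⟨(Finset.mem_filter.mp hv).2, Sym2.mem_mk_right _ _⟩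
      have h2 := Finset.card_le_card hsub
      rw [Finset.card_insert_of_notMem (by simpa using hne), Finset.card_singleton] at h2
      omega
  · rintro ⟨S, hScard, hSind⟩
    refine ⟨fun v => some (decide (v ∈ S)), fun v => by simp, ?_, ?_, ?_, ?_⟩
    · have : (Finset.univ.filter (fun v => (some (decide (v ∈ S)) : Option Bool) = some true)) = S := by
        ext v; simp
      rw [this, hScard]
    · have : (Finset.univ.filter (fun v => (some (decide (v ∈ S)) : Option Bool) = some false)) = Sᶜ := by
        ext v; simp
      rw [this, Finset.card_compl, hScard]
    · intro e he
      induction e using Sym2.ind with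
      | _ u v =>
        rw [SimpleGraph.mem_edgeSet] at he
        rw [Finset.card_le_one]
        intro a ha b hb
        simp only [Finset.mem_filter, Finset.mem_univ, true_and, Option.some.injEq,
          decide_eq_true_eq, Sym2.mem_iff] at ha hb
        obtain ⟨haS, ha'⟩ := ha
        obtain ⟨hbS, hb'⟩ := hb
        rcases ha' with rfl | rfl <;> rcases hb' with rfl | rfl
        · rfl
        · exact absurd he (hSind _ haS _ hbS)
        · exact absurd he.symm (hSind _ haS _ hbS)
        · rfl
    · intro e he
      calc (Finset.univ.filter (fun v => (some (decide (v ∈ S)) : Option Bool) = some false ∧ v ∈ e)).card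
          ≤ (Finset.univ.filter (fun v => (some (decide (v ∈ S)) : Option Bool) = some false)).card :=
            Finset.card_le_card (by
              intro v hv
              simp only [Finset.mem_filter] at hv ⊢
              exact ⟨hv.1, hv.2.1⟩)
        _ ≤ Fintype.card V - k := by
            have : (Finset.univ.filter (fun v => (some (decide (v ∈ S)) : Option Bool) = some false)) = Sᶜ := by
              ext v; simp
            rw [this, Finset.card_compl, hScard]
end

section
/- Let D be a finite directed acyclic graph on vertex set P with m = |P| vertices and let d: P×P → ℕ be a weight function such that (p,q) is an arc iff d(p,q) > ρ_1 for a threshold ρ_1. Suppose a vertex p_0 and a target set T ⊆ P satisfy: d_in(p_0) := Σ_{q≠p_0} d(q,p_0) > ρ_m, and for every vertex p ∉ T, Σ_{q≠p} d(p,q) > d_in(p) − ρ − r_max where ρ_j satisfies (ρ_j − ρ − r_max)/(m−1) = ρ_{j−1}. Then there is a directed path in D from p_0 to some vertex of T. -/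
attribute [local instance] Classical.propDecidable

private noncomputable def chainDesc {P : Type*} [Fintype P] (A : P → P → Prop) (p : P) : Finset P :=
  Finset.univ.filter (fun q => Relation.TransGen A p q)

/-- Abstract chain lemma: on a finite vertex set `P` with `m = |P|` vertices, let
`d` be a weight function and declare an arc `p → q` whenever `d p q > ρ_1`
(`ρ_1 = seq 1`). Suppose the arc relation is acyclic, the thresholds satisfy
`seq j = seq (j-1)·(m-1) + ρ + r_max` for `j ≥ 2`, the in-flow of `p₀` exceeds
`seq m`, and every vertex `p ∉ T` has out-flow exceeding its in-flow minus
`ρ + r_max`. Then there is a directed path from `p₀` to some vertex of `T`. -/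
theorem stmt_14 {P : Type*} [Fintype P] [DecidableEq P]
    (ρ r_max m : ℕ) (hm : m = Fintype.card P) (hm2 : 2 ≤ m)
    (d : P → P → ℕ) (seq : ℕ → ℕ)
    (hrec : ∀ j, 2 ≤ j → seq j = seq (j - 1) * (m - 1) + ρ + r_max)
    (hacyc : ∀ p : P, ¬ Relation.TransGen (fun p q => seq 1 < d p q) p p)
    (p0 : P) (T : Set P)
    (hin : seq m < ∑ q ∈ Finset.univ.filter (fun q => q ≠ p0), d q p0)
    (hT : ∀ p : P, p ∉ T →
      (∑ q ∈ Finset.univ.filter (fun q => q ≠ p), d q p) <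
        (∑ q ∈ Finset.univ.filter (fun q => q ≠ p), d p q) + ρ + r_max) :
    ∃ t ∈ T, Relation.ReflTransGen (fun p q => seq 1 < d p q) p0 t := by
  classical
  by_contra hcon
  push_neg at hcon
  set A : P → P → Prop := (fun p q => seq 1 < d p q) with hA
  have hm1 : 1 ≤ m - 1 := by omega
  -- monotonicity of seq on indices ≥ 1
  have mono : ∀ i j : ℕ, 1 ≤ i → i ≤ j → seq i ≤ seq j := by
    intro i j h1 hij
    induction j with
    | zero => omega
    | succ j ih =>
      rcases Nat.lt_or_ge i (j + 1) with h | h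
      · have h2 : seq j ≤ seq (j + 1) := by
          rw [hrec (j + 1) (by omega)]
          simp only [Nat.add_sub_cancel]
          calc seq j = seq j * 1 := (mul_one _).symm
            _ ≤ seq j * (m - 1) := Nat.mul_le_mul_left _ hm1
            _ ≤ seq j * (m - 1) + ρ + r_max := by omega
        exact le_trans (ih (by omega)) h2
      · have : i = j + 1 := by omega
        rw [this]
    -- in-flow abbreviation facts
  have hcard_ne : ∀ p : P, (Finset.univ.filter (fun q => q ≠ p)).card = m - 1 := by
    intro p
    rw [Finset.filter_ne', Finset.card_erase_of_mem (Finset.mem_univ _), Finset.card_univ, hm]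
  -- single term below in-flow
  have hsingle : ∀ p q : P, p ≠ q →
      d p q ≤ ∑ r ∈ Finset.univ.filter (fun r => r ≠ q), d r q := by
    intro p q hpq
    exact Finset.single_le_sum (f := fun r => d r q) (fun _ _ => Nat.zero_le _)
      (by simp [hpq])
  -- the main claim
  have claim : ∀ n : ℕ, ∀ p : P, (∀ t ∈ T, ¬ Relation.ReflTransGen A p t) →
      (chainDesc A p).card ≤ n →
      (∑ q ∈ Finset.univ.filter (fun q => q ≠ p), d q p) < seq (n + 2) := by
    intro n
    induction n with
    | zero =>
      intro p hU hcard
      have hpT : p ∉ T := fun hp => hU p hp Relation.ReflTransGen.refl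
      have hbound : ∀ q ∈ Finset.univ.filter (fun q => q ≠ p), d p q ≤ seq 1 := by
        intro q hq
        by_contra h
        push_neg at h
        have : q ∈ chainDesc A p := by
          simp only [chainDesc, Finset.mem_filter, Finset.mem_univ, true_and]
          exact Relation.TransGen.single h
        have := Finset.card_pos.mpr ⟨q, this⟩
        omega
      have hsum : (∑ q ∈ Finset.univ.filter (fun q => q ≠ p), d p q) ≤ (m - 1) * seq 1 := by
        calc (∑ q ∈ Finset.univ.filter (fun q => q ≠ p), d p q)
            ≤ (Finset.univ.filter (fun q => q ≠ p)).card • seq 1 :=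
              Finset.sum_le_card_nsmul _ _ _ hbound
          _ = (m - 1) * seq 1 := by rw [hcard_ne, smul_eq_mul]
      have h2 : seq (0 + 2) = seq 1 * (m - 1) + ρ + r_max := by
        have := hrec 2 le_rfl
        simpa using this
      calc (∑ q ∈ Finset.univ.filter (fun q => q ≠ p), d q p)
          < (∑ q ∈ Finset.univ.filter (fun q => q ≠ p), d p q) + ρ + r_max := hT p hpT
        _ ≤ (m - 1) * seq 1 + ρ + r_max := by omega
        _ = seq 1 * (m - 1) + ρ + r_max := by rw [Nat.mul_comm]
        _ = seq (0 + 2) := h2.symm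
    | succ n ih =>
      intro p hU hcard
      have hpT : p ∉ T := fun hp => hU p hp Relation.ReflTransGen.refl
      have hbound : ∀ q ∈ Finset.univ.filter (fun q => q ≠ p), d p q ≤ seq (n + 2) := by
        intro q hq
        simp only [Finset.mem_filter, Finset.mem_univ, true_and] at hq
        by_cases h1 : d p q ≤ seq 1
        · exact le_trans h1 (mono 1 (n + 2) le_rfl (by omega))
        · push_neg at h1
          have harc : A p q := h1
          -- q is also in U
          have hUq : ∀ t ∈ T, ¬ Relation.ReflTransGen A q t := by
            intro t ht hqt
            exact hU t ht (Relation.ReflTransGen.head harc hqt)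
          -- descendants of q
          have hqmem : q ∈ chainDesc A p := by
            simp only [chainDesc, Finset.mem_filter, Finset.mem_univ, true_and]
            exact Relation.TransGen.single harc
          have hsub : chainDesc A q ⊆ (chainDesc A p).erase q := by
            intro r hr
            simp only [chainDesc, Finset.mem_filter, Finset.mem_univ, true_and] at hr
            rw [Finset.mem_erase]
            refine ⟨fun h => hacyc q (h ▸ hr), ?_⟩
            simp only [chainDesc, Finset.mem_filter, Finset.mem_univ, true_and]
            exact (Relation.TransGen.single harc).trans hr
          have hcardq : (chainDesc A q).card ≤ n := by
            have h3 := Finset.card_le_card hsub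
            have h4 := Finset.card_erase_of_mem hqmem
            omega
          have hinq := ih q hUq hcardq
          calc d p q ≤ ∑ r ∈ Finset.univ.filter (fun r => r ≠ q), d r q :=
                hsingle p q (fun h => hacyc q (Relation.TransGen.single (h ▸ harc)))
            _ ≤ seq (n + 2) := le_of_lt hinq
      have hsum : (∑ q ∈ Finset.univ.filter (fun q => q ≠ p), d p q)
          ≤ (m - 1) * seq (n + 2) := by
        calc (∑ q ∈ Finset.univ.filter (fun q => q ≠ p), d p q)
            ≤ (Finset.univ.filter (fun q => q ≠ p)).card • seq (n + 2) :=
              Finset.sum_le_card_nsmul _ _ _ hbound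
          _ = (m - 1) * seq (n + 2) := by rw [hcard_ne, smul_eq_mul]
      have h2 : seq (n + 3) = seq (n + 2) * (m - 1) + ρ + r_max := by
        have := hrec (n + 3) (by omega)
        simpa using this
      calc (∑ q ∈ Finset.univ.filter (fun q => q ≠ p), d q p)
          < (∑ q ∈ Finset.univ.filter (fun q => q ≠ p), d p q) + ρ + r_max := hT p hpT
        _ ≤ (m - 1) * seq (n + 2) + ρ + r_max := by omega
        _ = seq (n + 2) * (m - 1) + ρ + r_max := by rw [Nat.mul_comm]
        _ = seq (n + 1 + 2) := h2.symm
  -- finish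
  by_cases hc : (chainDesc A p0).card ≤ m - 2
  · have h := claim (m - 2) p0 hcon hc
    rw [show m - 2 + 2 = m by omega] at h
    omega
  · -- then every other vertex is a descendant of p0
    have hsub : chainDesc A p0 ⊆ Finset.univ.erase p0 := by
      intro q hq
      simp only [chainDesc, Finset.mem_filter, Finset.mem_univ, true_and] at hq
      rw [Finset.mem_erase]
      exact ⟨fun h => hacyc p0 (h ▸ hq), Finset.mem_univ q⟩
    have hcard_erase : (Finset.univ.erase p0).card = m - 1 := by
      rw [Finset.card_erase_of_mem (Finset.mem_univ _), Finset.card_univ, hm]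
    have heq : chainDesc A p0 = Finset.univ.erase p0 :=
      Finset.eq_of_subset_of_card_le hsub (by omega)
    have hall : ∀ q ∈ Finset.univ.filter (fun q => q ≠ p0), d q p0 ≤ seq 1 := by
      intro q hq
      simp only [Finset.mem_filter, Finset.mem_univ, true_and] at hq
      by_contra h
      push_neg at h
      have hqd : q ∈ chainDesc A p0 := by
        rw [heq, Finset.mem_erase]; exact ⟨hq, Finset.mem_univ _⟩
      simp only [chainDesc, Finset.mem_filter, Finset.mem_univ, true_and] at hqd
      exact hacyc p0 (hqd.trans (Relation.TransGen.single h))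
    have hin2 : (∑ q ∈ Finset.univ.filter (fun q => q ≠ p0), d q p0) ≤ (m - 1) * seq 1 := by
      calc (∑ q ∈ Finset.univ.filter (fun q => q ≠ p0), d q p0)
          ≤ (Finset.univ.filter (fun q => q ≠ p0)).card • seq 1 :=
            Finset.sum_le_card_nsmul _ _ _ hall
        _ = (m - 1) * seq 1 := by rw [hcard_ne, smul_eq_mul]
    have hs2 : seq 2 = seq 1 * (m - 1) + ρ + r_max := by
      have := hrec 2 le_rfl
      simpa using this
    have hle : seq 2 ≤ seq m := mono 2 m (by omega) hm2
    have : seq m < seq m := by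
      calc seq m < ∑ q ∈ Finset.univ.filter (fun q => q ≠ p0), d q p0 := hin
        _ ≤ (m - 1) * seq 1 := hin2
        _ = seq 1 * (m - 1) := by rw [Nat.mul_comm]
        _ ≤ seq 1 * (m - 1) + ρ + r_max := by omega
        _ = seq 2 := hs2.symm
        _ ≤ seq m := hle
    omega
end

section
/- Let G = (A ∪ P, E) be a bipartite graph where A is a family of disjoint nonempty subsets of a finite family set F (a partial partition), P a set of places with vector quotas, a part Γ ∈ A adjacent to p_j iff lower quota of p_j ≤ Σ_{f_i∈Γ} r_i ≤ upper quota of p_j (component-wise in ℕ^t), with edge weight Σ_{f_i∈Γ} u_i[j]. Then matchings M in G correspond bijectively to feasible assignments σ with {σ^{-1}(p_j) : p_j matched} = {Γ matched}, and the weight of M equals util(σ). -/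
attribute [local instance] Classical.propDecidable

section
variable {F P : Type*} [Fintype F] [Fintype P] {t : ℕ}

/-- Load of a place under an assignment: coordinatewise sum of the requirement
vectors of the families assigned to it. -/
noncomputable def load15 (r : F → Fin t → ℕ) (σ : F → Option P) (p : P) (k : Fin t) : ℕ :=
  ∑ f ∈ Finset.univ.filter (fun f => σ f = some p), r f k

/-- Feasibility: every place's load lies between its lower and upper quota. -/
def Feasible15 (r : F → Fin t → ℕ) (lo hi : P → Fin t → ℕ) (σ : F → Option P) : Prop :=
  ∀ p k, lo p k ≤ load15 r σ p k ∧ load15 r σ p k ≤ hi p k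

/-- Total utility of an assignment. -/
noncomputable def util15 (u : F → P → ℤ) (σ : F → Option P) : ℤ :=
  ∑ f, (σ f).elim 0 (u f)

/-- A part `Γ` is adjacent to place `p` iff its total requirement lies between the
quotas of `p` (componentwise). -/
def adj15 (r : F → Fin t → ℕ) (lo hi : P → Fin t → ℕ) (Γ : Finset F) (p : P) : Prop :=
  ∀ k, lo p k ≤ (∑ f ∈ Γ, r f k) ∧ (∑ f ∈ Γ, r f k) ≤ hi p k

/-- Weight of a matching (encoded as a partial map from places to parts). -/
noncomputable def weight15 (u : F → P → ℤ) (μ : P → Option (Finset F)) : ℤ :=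
  ∑ p, (μ p).elim 0 (fun Γ => ∑ f ∈ Γ, u f p)

/-- `μ` is a matching of the bipartite graph: matched pairs are edges (parts of `A`
adjacent to their place), no part is used twice, and every place with a nonzero
lower quota is matched. -/
def IsMatching15 (r : F → Fin t → ℕ) (lo hi : P → Fin t → ℕ)
    (A : Finset (Finset F)) (μ : P → Option (Finset F)) : Prop :=
  (∀ p Γ, μ p = some Γ → Γ ∈ A ∧ adj15 r lo hi Γ p) ∧
  (∀ p q Γ, μ p = some Γ → μ q = some Γ → p = q) ∧
  (∀ p, μ p = none → ∀ k, lo p k = 0)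

/-- The assignment corresponding to a matching: `f` is assigned to `p` iff `f`
belongs to the part matched to `p`. -/
def Linked15 (σ : F → Option P) (μ : P → Option (Finset F)) : Prop :=
  ∀ f p, σ f = some p ↔ ∃ Γ, μ p = some Γ ∧ f ∈ Γ

end

lemma util15_eq {F P : Type*} [Fintype F] [Fintype P]
    (u : F → P → ℤ) (σ : F → Option P) :
    util15 u σ = ∑ p, ∑ f ∈ Finset.univ.filter (fun f => σ f = some p), u f p := by
  unfold util15
  have h : ∀ f, (σ f).elim 0 (u f) = ∑ p, if σ f = some p then u f p else 0 := by
    intro f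
    cases h : σ f with
    | none => simp
    | some p0 => simp
  simp only [h]
  rw [Finset.sum_comm]
  simp [Finset.sum_filter]

/-- Matchings of the auxiliary bipartite graph between a partial partition `A` of
the families and the places correspond to feasible assignments whose nonempty
preimages are the matched parts, with matching weight equal to total utility. -/
theorem stmt_15 {F P : Type*} [Fintype F] [Fintype P] {t : ℕ}
    (r : F → Fin t → ℕ) (lo hi : P → Fin t → ℕ) (u : F → P → ℤ)
    (A : Finset (Finset F))
    (hA1 : ∀ Γ ∈ A, Γ.Nonempty)
    (hA2 : ∀ Γ ∈ A, ∀ Γ' ∈ A, Γ ≠ Γ' → Disjoint Γ Γ') :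
    (∀ (μ : P → Option (Finset F)) (σ : F → Option P),
      IsMatching15 r lo hi A μ → Linked15 σ μ →
      Feasible15 r lo hi σ ∧ util15 u σ = weight15 u μ) ∧
    (∀ σ : F → Option P, Feasible15 r lo hi σ →
      (∀ p : P, (Finset.univ.filter (fun f => σ f = some p)).Nonempty →
        Finset.univ.filter (fun f => σ f = some p) ∈ A) →
      ∃ μ : P → Option (Finset F),
        IsMatching15 r lo hi A μ ∧ Linked15 σ μ ∧ weight15 u μ = util15 u σ) := by
  constructor
  · intro μ σ hM hL
    obtain ⟨hedge, hinj, hlow⟩ := hM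
    have hset : ∀ p, Finset.univ.filter (fun f => σ f = some p) = (μ p).elim ∅ id := by
      intro p
      ext f
      simp only [Finset.mem_filter, Finset.mem_univ, true_and, hL f p]
      cases h : μ p with
      | none => simp
      | some Γ => simp
    constructor
    · intro p k
      unfold load15
      rw [hset p]
      cases h : μ p with
      | none => simpa using (hlow p h k).le
      | some Γ => simpa using (hedge p Γ h).2 k
    · rw [util15_eq]
      unfold weight15
      refine Finset.sum_congr rfl fun p _ => ?_
      rw [hset p]
      cases h : μ p with
      | none => simp
      | some Γ => simp
  · intro σ hF hpre
    set S : P → Finset F := fun p => Finset.univ.filter (fun f => σ f = some p) with hS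
    refine ⟨fun p => if h : (S p).Nonempty then some (S p) else none, ⟨?_, ?_, ?_⟩, ?_, ?_⟩
    · intro p Γ h
      by_cases hne : (S p).Nonempty
      · simp only [dif_pos hne, Option.some_inj] at h
        subst h
        refine ⟨hpre p hne, fun k => ?_⟩
        have := hF p k
        unfold load15 at this
        exact this
      · simp only [dif_neg hne] at h; exact absurd h (by simp)
    · intro p q Γ hp hq
      by_cases hnp : (S p).Nonempty
      · by_cases hnq : (S q).Nonempty
        · simp only [dif_pos hnp, Option.some_inj] at hp
          simp only [dif_pos hnq, Option.some_inj] at hq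
          obtain ⟨f, hf⟩ := hnp
          have hf2 : f ∈ S q := by rw [hq, ← hp]; exact hf
          simp only [hS, Finset.mem_filter] at hf hf2
          have := hf.2.symm.trans hf2.2
          exact Option.some_inj.mp this
        · simp only [dif_neg hnq] at hq; exact absurd hq (by simp)
      · simp only [dif_neg hnp] at hp; exact absurd hp (by simp)
    · intro p h k
      by_cases hne : (S p).Nonempty
      · simp only [dif_pos hne] at h; exact absurd h (by simp)
      · have hempty : S p = ∅ := Finset.not_nonempty_iff_eq_empty.mp hne
        have := (hF p k).1
        unfold load15 at this
        have : lo p k ≤ ∑ f ∈ S p, r f k := this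
        rw [hempty] at this
        simpa using this
    · intro f p
      constructor
      · intro h
        have hf : f ∈ S p := by simp [hS, h]
        have hne : (S p).Nonempty := ⟨f, hf⟩
        exact ⟨S p, by simp only [dif_pos hne], hf⟩
      · rintro ⟨Γ, hΓ, hfΓ⟩
        by_cases hne : (S p).Nonempty
        · simp only [dif_pos hne, Option.some_inj] at hΓ
          subst hΓ
          simpa [hS] using hfΓ
        · simp only [dif_neg hne] at hΓ; exact absurd hΓ (by simp)
    · rw [util15_eq]
      unfold weight15
      refine Finset.sum_congr rfl fun p _ => ?_
      by_cases hne : (S p).Nonempty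
      · simp only [dif_pos hne]; rfl
      · simp only [dif_neg hne]
        have hempty : S p = ∅ := Finset.not_nonempty_iff_eq_empty.mp hne
        simp [hS] at hempty
        simp [hempty]
end
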